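/- The polynomial Π(ω) = (1/64)(1+ω)³(32 - 33ω + 3ω² + 9ω³ - 3ω⁴) satisfies Π(ω) + Π(-ω) = 1 for all ω, Π(0) = 1/2, Π(1) = 1, Π(-1) = 0, and Π is nondecreasing on [-1,1]. -/

import Mathlib

/-- Pi(ω) = (1/64)(1+ω)³(32-33ω+3ω²+9ω³-3ω⁴) satisfies
Pi(ω)+Pi(-ω)=1, Pi(0)=1/2, Pi(1)=1, Pi(-1)=0, and Pi is nondecreasing on [-1,1]. -/
theorem stmt_16 (Pi : ℝ → ℝ)
    (hPi : ∀ ω : ℝ, Pi ω = (1 / 64) * (1 + ω) ^ 3 *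
      (32 - 33 * ω + 3 * ω ^ 2 + 9 * ω ^ 3 - 3 * ω ^ 4)) :
    (∀ ω : ℝ, Pi ω + Pi (-ω) = 1) ∧ Pi 0 = 1 / 2 ∧ Pi 1 = 1 ∧ Pi (-1) = 0 ∧
    MonotoneOn Pi (Set.Icc (-1 : ℝ) 1) := by
  have hfun : Pi = fun ω : ℝ => (1 / 64) * (1 + ω) ^ 3 *
      (32 - 33 * ω + 3 * ω ^ 2 + 9 * ω ^ 3 - 3 * ω ^ 4) := funext hPi
  subst hfun
  refine ⟨fun ω => by ring, by norm_num, by norm_num, by norm_num, ?_⟩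
  have hderiv : ∀ x : ℝ, HasDerivAt (fun ω : ℝ => (1 / 64) * (1 + ω) ^ 3 *
      (32 - 33 * ω + 3 * ω ^ 2 + 9 * ω ^ 3 - 3 * ω ^ 4))
      ((21 / 64) * (1 - x ^ 2) ^ 2 * (3 - x ^ 2)) x := by
    intro x
    have h1 : HasDerivAt (fun ω : ℝ => (1 + ω) ^ 3) (3 * (1 + x) ^ 2) x := by
      have := ((hasDerivAt_id x).const_add 1).fun_pow 3
      simpa using this
    have h2 : HasDerivAt (fun ω : ℝ => 32 - 33 * ω + 3 * ω ^ 2 + 9 * ω ^ 3 - 3 * ω ^ 4)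
        (-33 + 6 * x + 27 * x ^ 2 - 12 * x ^ 3) x := by
      have ha := (hasDerivAt_id x).const_mul (33 : ℝ)
      have hb := (hasDerivAt_pow 2 x).const_mul (3 : ℝ)
      have hc := (hasDerivAt_pow 3 x).const_mul (9 : ℝ)
      have hd := (hasDerivAt_pow 4 x).const_mul (3 : ℝ)
      have := (((((hasDerivAt_const x (32 : ℝ)).fun_sub ha).fun_add hb).fun_add hc).fun_sub hd)
      exact this.congr_deriv (by ring)
    have := (h1.const_mul (1 / 64 : ℝ)).fun_mul h2
    exact this.congr_deriv (by ring)
  apply monotoneOn_of_deriv_nonneg (convex_Icc _ _)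
  · exact Continuous.continuousOn (by continuity)
  · intro x hx
    exact (hderiv x).differentiableAt.differentiableWithinAt
  · intro x hx
    rw [interior_Icc] at hx
    rw [(hderiv x).deriv]
    have h3 : (0:ℝ) ≤ 3 - x ^ 2 := by nlinarith [hx.1, hx.2]
    have := mul_nonneg (mul_nonneg (by norm_num : (0:ℝ) ≤ 21/64) (sq_nonneg (1 - x ^ 2))) h3
    linarith
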